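/- Let F be a modular flat of a matroid M and let C be a circuit of M such that C ∩ F is non-empty and C is not contained in F. Then cl(C−F) ∩ F is non-empty. -/

import Mathlib

open Set

namespace Matroid

variable {α : Type*} {β : Type*}

/-- The rank of a set in a matroid: the supremum of sizes of independent subsets. -/
noncomputable def mRank (M : Matroid α) (X : Set α) : ℕ :=
  sSup {n : ℕ | ∃ I, M.Indep I ∧ I ⊆ X ∧ I.ncard = n}

/-- The rank of a matroid. -/
noncomputable def mRk (M : Matroid α) : ℕ := M.mRank M.E

/-- A flat `F` is modular if `r F + r F' = r (F ∪ F') + r (F ∩ F')` for every flat `F'`. -/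
def IsModularFlat (M : Matroid α) (F : Set α) : Prop :=
  M.IsFlat F ∧ ∀ F', M.IsFlat F' →
    M.mRank F + M.mRank F' = M.mRank (F ∪ F') + M.mRank (F ∩ F')

/-- A proper flat is a flat other than the ground set. -/
def IsProperFlat (M : Matroid α) (F : Set α) : Prop := M.IsFlat F ∧ F ≠ M.E

/-- A vertical cover is a pair of proper flats whose union is the ground set. -/
def VerticalCover (M : Matroid α) (F F' : Set α) : Prop :=
  M.IsProperFlat F ∧ M.IsProperFlat F' ∧ F ∪ F' = M.E

/-- A modular cover is a vertical cover by two modular flats. -/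
def ModularCover (M : Matroid α) (F F' : Set α) : Prop :=
  M.VerticalCover F F' ∧ M.IsModularFlat F ∧ M.IsModularFlat F'

/-- A matroid is round if it has no vertical cover. -/
def Round (M : Matroid α) : Prop := ∀ F F', ¬ M.VerticalCover F F'

/-- A subset of the ground set is round if the restriction to it is round. -/
def RoundSet (M : Matroid α) (X : Set α) : Prop := X ⊆ M.E ∧ (M ↾ X).Round

/-- A rotunda is a maximal round flat. -/
def Rotunda (M : Matroid α) (R : Set α) : Prop :=
  M.IsFlat R ∧ M.RoundSet R ∧ ∀ R', M.IsFlat R' → M.RoundSet R' → R ⊆ R' → R' = R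

/-- A matroid of rank `r` is supersolvable if there is a chain of modular flats
`F 0 ⊆ F 1 ⊆ ⋯ ⊆ F r` with `r (F i) = i` for each `i`. -/
def Supersolvable (M : Matroid α) : Prop :=
  ∃ F : ℕ → Set α, (∀ i ≤ M.mRk, M.IsModularFlat (F i) ∧ M.mRank (F i) = i) ∧
    ∀ i < M.mRk, F i ⊆ F (i + 1)

/-- A matroid is saturated if every round flat is modular. -/
def Saturated (M : Matroid α) : Prop :=
  ∀ F, M.IsFlat F → M.RoundSet F → M.IsModularFlat F

/-- A circuit: a minimal dependent subset of the ground set. -/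
def Circ (M : Matroid α) (C : Set α) : Prop :=
  C ⊆ M.E ∧ ¬ M.Indep C ∧ ∀ D ⊂ C, M.Indep D

/-- A matroid is connected if it is non-empty and every two distinct elements lie in a
common circuit. -/
def ConnectedM (M : Matroid α) : Prop :=
  M.E.Nonempty ∧ ∀ x ∈ M.E, ∀ y ∈ M.E, x = y ∨ ∃ C, M.Circ C ∧ x ∈ C ∧ y ∈ C

/-- A hyperplane: a flat of rank `r M - 1`. -/
def IsHyperplane (M : Matroid α) (H : Set α) : Prop :=
  M.IsFlat H ∧ M.mRank H + 1 = M.mRk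

/-- The union of the projections `P_H(x, y) = H ∩ cl (x ∪ y)` onto the modular hyperplane `H`,
taken over all pairs of distinct rank-one flats `x = cl {a}`, `y = cl {b}` spanned by
elements `a, b` of `X`. -/
def projUnion (M : Matroid α) (H X : Set α) : Set α :=
  ⋃ a ∈ X, ⋃ b ∈ X, ⋃ (_ : M.closure {a} ≠ M.closure {b}), H ∩ M.closure {a, b}

/-- Two elements are related if they are equal or lie in a common circuit; the connected
components of a matroid are the restrictions to the equivalence classes of this relation. -/
def connRel (M : Matroid α) (x y : α) : Prop :=
  x = y ∨ ∃ C, M.Circ C ∧ x ∈ C ∧ y ∈ C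

/-- The rotunda graph of a matroid: vertices are the rotunda; two rotunda are adjacent if
they intersect and there is a modular cover separating them at their intersection. -/
def rotundaGraph (M : Matroid α) : SimpleGraph {R : Set α // M.Rotunda R} where
  Adj R₁ R₂ := R₁ ≠ R₂ ∧ (R₁.1 ∩ R₂.1).Nonempty ∧
    ∃ F₁ F₂, M.ModularCover F₁ F₂ ∧ R₁.1 ⊆ F₁ ∧ R₂.1 ⊆ F₂ ∧ F₁ ∩ F₂ = R₁.1 ∩ R₂.1
  symm := ⟨by
    rintro a b ⟨hne, hint, F₁, F₂, ⟨⟨hp1, hp2, hu⟩, hm1, hm2⟩, h1, h2, hi⟩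
    refine ⟨hne.symm, by rwa [Set.inter_comm], F₂, F₁,
      ⟨⟨hp2, hp1, by rwa [Set.union_comm]⟩, hm2, hm1⟩, h2, h1, ?_⟩
    rw [Set.inter_comm, hi, Set.inter_comm]⟩
  loopless := ⟨fun a h => h.1 rfl⟩

/-- A rotunda tree of `M`: a tree on the rotunda of `M` such that for each element `x` of the
ground set, the rotunda containing `x` induce a (nonempty) subtree. -/
def IsRotundaTree (M : Matroid α) (T : SimpleGraph {R : Set α // M.Rotunda R}) : Prop :=
  T.IsTree ∧ ∀ x ∈ M.E, (T.induce {t : {R : Set α // M.Rotunda R} | x ∈ t.1}).Connected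

/-- A legitimate weighting of `M`: zero on the empty set, and strictly monotone under proper
inclusion on the set consisting of `∅` and the pairwise intersections of distinct rotunda. -/
def LegitimateWeighting (M : Matroid α) (σ : Set α → ℕ) : Prop :=
  σ ∅ = 0 ∧
  ∀ X X' : Set α,
    (X = ∅ ∨ ∃ R R', M.Rotunda R ∧ M.Rotunda R' ∧ R ≠ R' ∧ X = R ∩ R') →
    (X' = ∅ ∨ ∃ R R', M.Rotunda R ∧ M.Rotunda R' ∧ R ≠ R' ∧ X' = R ∩ R') →
    X ⊂ X' → σ X < σ X'

/-- The total weight of a graph on the rotunda of `M`, where the edge joining rotunda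
`R` and `R'` gets weight `σ (R ∩ R')`. -/
noncomputable def treeWeight {M : Matroid α} (σ : Set α → ℕ)
    (T : SimpleGraph {R : Set α // M.Rotunda R}) : ℕ :=
  ∑ᶠ e ∈ T.edgeSet,
    Sym2.lift ⟨fun a b => σ (a.1 ∩ b.1), fun a b => by simp [Set.inter_comm]⟩ e

/-- A tree-decomposition of a matroid: a tree together with bags covering the ground set. -/
def IsTreeDecomp (M : Matroid α) (T : SimpleGraph β) (τ : β → Set α) : Prop :=
  T.IsTree ∧ ∀ x ∈ M.E, ∃ t, x ∈ τ t

/-- The node-width of a node `t` in a tree-decomposition `(T, τ)` of `M`: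
`(Σ_i r (τ t ∪ ⋃_{k ≠ i} F_k)) − (d − 1) · r M`, where `F_1, …, F_d` are the unions of the
bags over the connected components of `T − t`. -/
noncomputable def nodeWidth (M : Matroid α) (T : SimpleGraph β) (τ : β → Set α) (t : β) : ℤ :=
  (∑ᶠ c : (T.induce {s : β | s ≠ t}).ConnectedComponent,
      (M.mRank (τ t ∪ ⋃ (s : {s : β // s ≠ t})
        (_ : (T.induce {s : β | s ≠ t}).connectedComponentMk s ≠ c), τ s.1) : ℤ))
    - ((Nat.card (T.induce {s : β | s ≠ t}).ConnectedComponent : ℤ) - 1) * (M.mRk : ℤ)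

/-- The width of a tree-decomposition: the maximum node-width. -/
noncomputable def decompWidth (M : Matroid α) (T : SimpleGraph β) (τ : β → Set α) : ℤ :=
  sSup (Set.range (M.nodeWidth T τ))

/-- The tree-width of a matroid: the minimum width of a (finite) tree-decomposition. -/
noncomputable def treeWidth (M : Matroid α) : ℕ :=
  sInf {n : ℕ | ∃ (β : Type) (T : SimpleGraph β) (τ : β → Set α),
    Finite β ∧ M.IsTreeDecomp T τ ∧ ∀ t, M.nodeWidth T τ t ≤ (n : ℤ)}

end Matroid

namespace SimpleGraph

/-- A graph is chordal if every cycle with at least four edges has a chord: an edge of the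
graph joining two vertices of the cycle that is not an edge of the cycle. -/
def IsChordal {V : Type*} (G : SimpleGraph V) : Prop :=
  ∀ ⦃v : V⦄ (w : G.Walk v v), w.IsCycle → 4 ≤ w.length →
    ∃ x y, x ∈ w.support ∧ y ∈ w.support ∧ G.Adj x y ∧ s(x, y) ∉ w.edges

/-- A maximal clique of a graph. -/
def MaxClique {V : Type*} (G : SimpleGraph V) (C : Set V) : Prop :=
  G.IsClique C ∧ ∀ D, G.IsClique D → C ⊆ D → D = C

/-- The reduced clique graph of a graph: vertices are the maximal cliques; two maximal
cliques are adjacent if they intersect and every walk from one side to the other passes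
through their intersection. -/
def reducedCliqueGraph {V : Type*} (G : SimpleGraph V) :
    SimpleGraph {C : Set V // G.MaxClique C} where
  Adj C₁ C₂ := C₁ ≠ C₂ ∧ (C₁.1 ∩ C₂.1).Nonempty ∧
    ∀ u ∈ C₁.1 \ C₂.1, ∀ v ∈ C₂.1 \ C₁.1, ∀ p : G.Walk u v,
      ∃ z ∈ p.support, z ∈ C₁.1 ∩ C₂.1
  symm := ⟨by
    rintro a b ⟨hne, hint, hsep⟩
    refine ⟨hne.symm, by rwa [Set.inter_comm], fun u hu v hv p => ?_⟩
    obtain ⟨z, hz, hz2⟩ := hsep v hv u hu p.reverse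
    refine ⟨z, ?_, by rwa [Set.inter_comm]⟩
    simpa [SimpleGraph.Walk.support_reverse] using hz⟩
  loopless := ⟨fun a h => h.1 rfl⟩

end SimpleGraph

namespace Matroid

variable {α : Type*} {M : Matroid α} {I J X Y : Set α}

lemma mRank_bddAbove [M.Finite] (X : Set α) :
    BddAbove {n : ℕ | ∃ I, M.Indep I ∧ I ⊆ X ∧ I.ncard = n} := by
  refine ⟨M.E.ncard, ?_⟩
  rintro n ⟨I, hI, -, rfl⟩
  exact Set.ncard_le_ncard hI.subset_ground M.ground_finite

lemma IsBasis'.mRank_eq [M.Finite] (hI : M.IsBasis' I X) : M.mRank X = I.ncard := by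
  refine le_antisymm (csSup_le ⟨I.ncard, I, hI.indep, hI.subset, rfl⟩ ?_)
    (le_csSup (M.mRank_bddAbove X) ⟨I, hI.indep, hI.subset, rfl⟩)
  rintro n ⟨J, hJ, hJX, rfl⟩
  obtain ⟨J', hJ', hJJ'⟩ := hJ.subset_isBasis'_of_subset hJX
  have hcard : J'.ncard = I.ncard :=
    (isBase_restrict_iff'.mpr hJ').ncard_eq_ncard_of_isBase (isBase_restrict_iff'.mpr hI)
  rw [← hcard]
  exact Set.ncard_le_ncard hJJ' (M.set_finite J' hJ'.indep.subset_ground)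

lemma Indep.mRank_eq_ncard [M.Finite] (hI : M.Indep I) : M.mRank I = I.ncard :=
  hI.isBasis_self.isBasis'.mRank_eq

lemma mRank_closure_eq [M.Finite] (X : Set α) : M.mRank (M.closure X) = M.mRank X := by
  obtain ⟨I, hI⟩ := M.exists_isBasis' X
  rw [hI.mRank_eq, hI.isBasis_closure_right.isBasis'.mRank_eq]

lemma ncard_le_mRank_of_indep_subset [M.Finite] (hI : M.Indep I) (hIX : I ⊆ X) :
    I.ncard ≤ M.mRank X :=
  le_csSup (M.mRank_bddAbove X) ⟨I, hI, hIX, rfl⟩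

lemma flat_closure (M : Matroid α) (X : Set α) : M.IsFlat (M.closure X) := by
  refine ⟨fun I Y hI hIY => ?_, M.closure_subset_ground X⟩
  have h1 : Y ⊆ M.closure I := hIY.subset_closure
  rwa [hI.closure_eq_closure, closure_closure] at h1

lemma mRank_submod [M.Finite] (X Y : Set α) :
    M.mRank (X ∪ Y) + M.mRank (X ∩ Y) ≤ M.mRank X + M.mRank Y := by
  obtain ⟨I, hI⟩ := M.exists_isBasis' (X ∩ Y)
  obtain ⟨J, hJ, hIJ⟩ := hI.indep.subset_isBasis'_of_subset
    (hI.subset.trans (Set.inter_subset_left.trans Set.subset_union_left))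
  have hJfin : J.Finite := M.set_finite J hJ.indep.subset_ground
  rw [hJ.mRank_eq, hI.mRank_eq]
  have h1 : (J ∩ X).ncard ≤ M.mRank X :=
    ncard_le_mRank_of_indep_subset (hJ.indep.subset Set.inter_subset_left)
      Set.inter_subset_right
  have h2 : (J ∩ Y).ncard ≤ M.mRank Y :=
    ncard_le_mRank_of_indep_subset (hJ.indep.subset Set.inter_subset_left)
      Set.inter_subset_right
  have hunion : (J ∩ X) ∪ (J ∩ Y) = J := by
    rw [← Set.inter_union_distrib_left]
    exact Set.inter_eq_self_of_subset_left hJ.subset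
  have hsum : (J ∩ X).ncard + (J ∩ Y).ncard
      = ((J ∩ X) ∪ (J ∩ Y)).ncard + ((J ∩ X) ∩ (J ∩ Y)).ncard := by
    rw [Set.ncard_union_add_ncard_inter _ _ (hJfin.inter_of_left _) (hJfin.inter_of_left _)]
  rw [hunion] at hsum
  have hIsub : I ⊆ (J ∩ X) ∩ (J ∩ Y) := fun x hx =>
    ⟨⟨hIJ hx, (hI.subset hx).1⟩, hIJ hx, (hI.subset hx).2⟩
  have hle : I.ncard ≤ ((J ∩ X) ∩ (J ∩ Y)).ncard :=
    Set.ncard_le_ncard hIsub ((hJfin.inter_of_left _).inter_of_left _)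
  omega

end Matroid

open Matroid

/-- If `F` is a modular flat and `C` is a circuit meeting `F` but not contained in `F`, then
`cl (C − F) ∩ F` is non-empty. -/
theorem closure_diff_inter_modular_flat_nonempty {α : Type*} (M : Matroid α) [M.Finite]
    (F C : Set α) (hF : M.IsModularFlat F) (hC : M.Circ C)
    (hmeet : (C ∩ F).Nonempty) (hnsub : ¬ C ⊆ F) :
    (M.closure (C \ F) ∩ F).Nonempty := by
  by_contra hempty
  rw [Set.not_nonempty_iff_eq_empty] at hempty
  set F' := M.closure (C \ F) with hF'def
  have hCfin : C.Finite := M.set_finite C hC.1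
  -- proper subsets of the circuit are independent
  have hdiff_ss : C \ F ⊂ C := by
    refine ⟨Set.diff_subset, fun h => ?_⟩
    obtain ⟨x, hxC, hxF⟩ := hmeet
    exact (h hxC).2 hxF
  have hint_ss : C ∩ F ⊂ C := by
    refine ⟨Set.inter_subset_left, fun h => hnsub fun x hx => (h hx).2⟩
  have hIdiff : M.Indep (C \ F) := hC.2.2 _ hdiff_ss
  have hIint : M.Indep (C ∩ F) := hC.2.2 _ hint_ss
  -- rank facts
  have hrF' : M.mRank F' = (C \ F).ncard := by
    rw [hF'def, mRank_closure_eq, hIdiff.mRank_eq_ncard]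
  have hmod := hF.2 F' (M.flat_closure _)
  have h1 : M.mRank (F ∪ F') = M.mRank (F ∪ C) := by
    rw [hF'def, ← mRank_closure_eq (M := M) (X := F ∪ M.closure (C \ F)),
      closure_union_closure_right_eq, Set.union_diff_self, mRank_closure_eq]
  have hFF' : F ∩ F' = ∅ := by rw [Set.inter_comm]; exact hempty
  have hr0 : M.mRank (F ∩ F') = 0 := by
    rw [hFF']
    simpa using (M.empty_indep.mRank_eq_ncard)
  have hsub := M.mRank_submod F C
  have hintle : (C ∩ F).ncard ≤ M.mRank (F ∩ C) :=
    ncard_le_mRank_of_indep_subset hIint (by rw [Set.inter_comm])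
  -- circuit rank is less than its cardinality
  have hrC : M.mRank C < C.ncard := by
    obtain ⟨I, hI⟩ := M.exists_isBasis' C
    rw [hI.mRank_eq]
    have hne : I ≠ C := fun h => hC.2.1 (h ▸ hI.indep)
    exact Set.ncard_lt_ncard (hI.subset.ssubset_of_ne hne) hCfin
  have hcards : (C ∩ F).ncard + (C \ F).ncard = C.ncard :=
    Set.ncard_inter_add_ncard_diff_eq_ncard C F hCfin
  have hint_pos : 0 < (C ∩ F).ncard :=
    (Set.ncard_pos (hCfin.inter_of_left _)).mpr hmeet
  have hdiff_pos : 0 < (C \ F).ncard := by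
    refine (Set.ncard_pos (hCfin.diff (t := F))).mpr ?_
    obtain ⟨x, hxC, hxF⟩ := Set.not_subset.mp hnsub
    exact ⟨x, hxC, hxF⟩
  omega
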